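/- Let (R,m,k) be a commutative Noetherian local ring, let X be a finitely generated R-module and let N be a Burch submodule of X. Then there exists an element a ∈ m such that k is a direct summand of N/aN. If moreover depth_R(N) > 0, then a can be chosen to be a non-zero-divisor on N, and furthermore such that aN is a Burch submodule of N. -/

import Mathlib

open CategoryTheory

universe u

/-- The colon submodule `(N :_X I) = {x ∈ X : I • x ⊆ N}`. -/
def Submodule.colonBy {R X : Type u} [CommRing R] [AddCommGroup X] [Module R X]
    (N : Submodule R X) (I : Ideal R) : Submodule R X where
  carrier := {x | ∀ r ∈ I, r • x ∈ N}
  add_mem' := by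
    intro a b ha hb r hr
    rw [smul_add]
    exact N.add_mem (ha r hr) (hb r hr)
  zero_mem' := by
    intro r hr
    rw [smul_zero]
    exact N.zero_mem
  smul_mem' := by
    intro c x hx r hr
    rw [smul_comm]
    exact N.smul_mem c (hx r hr)

/-- A submodule `N` of a module `X` over a local ring `(R, 𝔪)` is *Burch* if
`𝔪 • (N :_X 𝔪) ≠ 𝔪 • N`. -/
def Submodule.IsBurch {R X : Type u} [CommRing R] [IsLocalRing R] [AddCommGroup X]
    [Module R X] (N : Submodule R X) : Prop :=
  IsLocalRing.maximalIdeal R • N.colonBy (IsLocalRing.maximalIdeal R) ≠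
    IsLocalRing.maximalIdeal R • N

/-- `Tor_n^R(M, N) = 0`. -/
def TorIsZero (R : Type u) [CommRing R] (M N : Type u) [AddCommGroup M] [Module R M]
    [AddCommGroup N] [Module R N] (n : ℕ) : Prop :=
  Subsingleton (((Tor (ModuleCat.{u} R) n).obj (ModuleCat.of R M)).obj (ModuleCat.of R N))

/-- `Ext^n_R(M, N) = 0`. -/
def ExtIsZero (R : Type u) [CommRing R] (M N : Type u) [AddCommGroup M] [Module R M]
    [AddCommGroup N] [Module R N] (n : ℕ) : Prop :=
  Subsingleton
    (((Ext R (ModuleCat.{u} R) n).obj (Opposite.op (ModuleCat.of R M))).obj (ModuleCat.of R N))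

/-- `M` has projective dimension strictly less than `t`, i.e. `M` admits a projective
resolution vanishing in all degrees `≥ t`. -/
def HasProjDimLT (R : Type u) [CommRing R] (M : Type u) [AddCommGroup M] [Module R M]
    (t : ℕ) : Prop :=
  ∃ P : ProjectiveResolution (ModuleCat.of R M), ∀ i, t ≤ i → Limits.IsZero (P.complex.X i)

/-- `M` has injective dimension strictly less than `t`, i.e. `M` admits an injective
resolution vanishing in all degrees `≥ t`. -/
def HasInjDimLT (R : Type u) [CommRing R] (M : Type u) [AddCommGroup M] [Module R M]
    (t : ℕ) : Prop :=
  ∃ I : InjectiveResolution (ModuleCat.of R M), ∀ i, t ≤ i → Limits.IsZero (I.cocomplex.X i)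

/-- The depth of a module `M` over a local ring `(R, 𝔪, k)`: the smallest `i` such that
`Ext^i_R(k, M) ≠ 0` (and `⊤` if no such `i` exists). -/
noncomputable def moduleDepth (R : Type u) [CommRing R] [IsLocalRing R] (M : Type u)
    [AddCommGroup M] [Module R M] : ℕ∞ :=
  sInf {n : ℕ∞ | ∃ i : ℕ, n = (i : ℕ∞) ∧ ¬ ExtIsZero R (IsLocalRing.ResidueField R) M i}


section Aux

open Submodule IsLocalRing

variable {R : Type u} [CommRing R]

lemma BurchAux.span_smul_mem {M : Type u} [AddCommGroup M] [Module R M]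
    {a : R} {P : Submodule R M} {z : M} (h : z ∈ (Ideal.span {a} : Ideal R) • P) :
    ∃ w ∈ P, z = a • w := by
  refine Submodule.smul_induction_on h ?_ ?_
  · intro r hr n hn
    obtain ⟨c, rfl⟩ := Ideal.mem_span_singleton'.mp hr
    exact ⟨c • n, P.smul_mem c hn, by rw [mul_comm, mul_smul]⟩
  · rintro x y ⟨w, hw, rfl⟩ ⟨w', hw', rfl⟩
    exact ⟨w + w', P.add_mem hw hw', (smul_add _ _ _).symm⟩

lemma BurchAux.mem_smul_span_singleton_smul {M : Type u} [AddCommGroup M] [Module R M]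
    {a : R} {I : Ideal R} {z : M}
    (h : z ∈ I • ((Ideal.span {a} : Ideal R) • (⊤ : Submodule R M))) :
    ∃ w ∈ I • (⊤ : Submodule R M), z = a • w := by
  refine Submodule.smul_induction_on h ?_ ?_
  · intro r hr n hn
    obtain ⟨w, -, rfl⟩ := BurchAux.span_smul_mem hn
    exact ⟨r • w, Submodule.smul_mem_smul hr trivial, smul_comm r a w⟩
  · rintro x y ⟨w, hw, rfl⟩ ⟨w', hw', rfl⟩
    exact ⟨w + w', Submodule.add_mem _ hw hw', (smul_add _ _ _).symm⟩

lemma BurchAux.ann_span_subtype {M : Type u} [AddCommGroup M] [Module R M]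
    {P : Submodule R M} (z : ↥P) :
    (R ∙ z).annihilator = (R ∙ (z : M)).annihilator := by
  ext r
  simp only [Submodule.mem_annihilator_span_singleton]
  constructor
  · intro h
    have := congrArg (Subtype.val) h
    simpa using this
  · intro h
    exact Subtype.ext (by simpa using h)

lemma BurchAux.isAP_iff {M : Type u} [AddCommGroup M] [Module R M] [IsNoetherianRing R]
    {I : Ideal R} : IsAssociatedPrime I M ↔ I.IsPrime ∧ ∃ x : M, I = (R ∙ x).annihilator := by
  rw [isAssociatedPrime_iff]
  have h : ∀ x : M, (⊥ : Submodule R M).colon {x} = (R ∙ x).annihilator := by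
    intro x; ext r
    rw [Submodule.mem_colon_singleton, Submodule.mem_annihilator_span_singleton, Submodule.mem_bot]
  simp only [h]

lemma BurchAux.associatedPrimes_finite (M : Type u) [AddCommGroup M] [Module R M]
    [IsNoetherianRing R] [Module.Finite R M] :
    (associatedPrimes R M).Finite := by
  have hNoeth : IsNoetherian R M := inferInstance
  set S : Set (Submodule R M) := {U | (associatedPrimes R ↥U).Finite} with hS
  have hbot : (⊥ : Submodule R M) ∈ S := by
    haveI : Subsingleton ↥(⊥ : Submodule R M) := by
      constructor
      rintro ⟨u, hu⟩ ⟨v, hv⟩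
      simp only [Submodule.mem_bot] at hu hv
      simp [hu, hv]
    simp only [hS, Set.mem_setOf_eq, associatedPrimes.eq_empty_of_subsingleton]
    exact Set.finite_empty
  obtain ⟨U, hU, hmax⟩ := set_has_maximal_iff_noetherian.mpr hNoeth S ⟨⊥, hbot⟩
  have hUtop : U = ⊤ := by
    by_contra hne
    haveI := Submodule.Quotient.nontrivial_iff.mpr hne
    obtain ⟨p, hpA⟩ := associatedPrimes.nonempty R (M ⧸ U)
    obtain ⟨hprime, xb, hxb⟩ := BurchAux.isAP_iff.mp hpA
    obtain ⟨x, rfl⟩ := Submodule.Quotient.mk_surjective U xb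
    have hxU : x ∉ U := by
      intro hx
      apply hprime.ne_top
      have h0 : (Submodule.Quotient.mk x : M ⧸ U) = 0 := (Submodule.Quotient.mk_eq_zero U).mpr hx
      rw [hxb, h0, Submodule.span_zero_singleton, Submodule.annihilator_bot]
    set U' := U ⊔ (R ∙ x) with hU'
    have hUU' : U < U' := by
      refine lt_of_le_of_ne le_sup_left ?_
      intro h
      exact hxU (h ▸ Submodule.mem_sup_right (Submodule.mem_span_singleton_self x))
    have hsub : associatedPrimes R ↥U' ⊆ insert p (associatedPrimes R ↥U) := by
      rintro q hqA
      obtain ⟨hq, y, hy⟩ := BurchAux.isAP_iff.mp hqA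
      rw [BurchAux.ann_span_subtype] at hy
      by_cases hcase : ∃ r : R, r • (y : M) ∈ U ∧ r • (y : M) ≠ 0
      · obtain ⟨r, hrU, hr0⟩ := hcase
        refine Set.mem_insert_of_mem _ (BurchAux.isAP_iff.mpr ⟨hq, ⟨r • (y : M), hrU⟩, ?_⟩)
        rw [BurchAux.ann_span_subtype]
        ext s
        simp only [Submodule.mem_annihilator_span_singleton]
        constructor
        · intro hs
          have : s • (y : M) = 0 := (Submodule.mem_annihilator_span_singleton _ _).mp (hy ▸ hs)
          rw [smul_comm, this, smul_zero]
        · intro hs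
          have hsr : s * r ∈ q := by
            rw [hy, Submodule.mem_annihilator_span_singleton, mul_smul]
            exact hs
          rcases hq.mem_or_mem hsr with h | h
          · exact h
          · exact absurd ((Submodule.mem_annihilator_span_singleton _ _).mp (hy ▸ h)) hr0
      · push_neg at hcase
        set yb : M ⧸ U := Submodule.Quotient.mk (y : M) with hyb
        have hqy : q = (R ∙ yb).annihilator := by
          ext s
          rw [hy, Submodule.mem_annihilator_span_singleton,
            Submodule.mem_annihilator_span_singleton, hyb, ← Submodule.Quotient.mk_smul,
            Submodule.Quotient.mk_eq_zero]
          constructor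
          · intro hs; rw [hs]; exact U.zero_mem
          · intro hs; exact hcase s hs
        have hy0 : yb ≠ 0 := by
          intro h0
          apply hq.ne_top
          rw [hqy, h0, Submodule.span_zero_singleton, Submodule.annihilator_bot]
        have hymem : yb ∈ (R ∙ (Submodule.Quotient.mk x : M ⧸ U)) := by
          have hyU' : (y : M) ∈ U ⊔ (R ∙ x) := y.2
          rw [Submodule.mem_sup] at hyU'
          obtain ⟨u, hu, v, hv, huv⟩ := hyU'
          obtain ⟨c, rfl⟩ := Submodule.mem_span_singleton.mp hv
          rw [hyb, ← huv, Submodule.Quotient.mk_add,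
            (Submodule.Quotient.mk_eq_zero U).mpr hu, zero_add, Submodule.Quotient.mk_smul]
          exact Submodule.smul_mem _ c (Submodule.mem_span_singleton_self _)
        obtain ⟨c, hc⟩ := Submodule.mem_span_singleton.mp hymem
        have hcp : c ∉ p := by
          intro hcp
          apply hy0
          rw [← hc]
          exact (Submodule.mem_annihilator_span_singleton _ _).mp (hxb ▸ hcp)
        have hqp : q = p := by
          ext s
          constructor
          · intro hs
            have h1 : s • yb = 0 := (Submodule.mem_annihilator_span_singleton _ _).mp (hqy ▸ hs)
            rw [← hc] at h1
            have h2 : s * c ∈ p := by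
              rw [hxb, Submodule.mem_annihilator_span_singleton, mul_smul]
              exact h1
            rcases hprime.mem_or_mem h2 with h | h
            · exact h
            · exact absurd h hcp
          · intro hs
            have hsx : s • (Submodule.Quotient.mk x : M ⧸ U) = 0 :=
              (Submodule.mem_annihilator_span_singleton _ _).mp (hxb ▸ hs)
            rw [hqy, Submodule.mem_annihilator_span_singleton, ← hc, smul_comm, hsx, smul_zero]
        exact Set.mem_insert_iff.mpr (Or.inl hqp)
    have hU'S : U' ∈ S := Set.Finite.subset (hU.insert p) hsub
    exact hmax U' hU'S hUU'
  subst hUtop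
  exact (LinearEquiv.AssociatedPrimes.eq (Submodule.topEquiv (R := R) (M := M))) ▸ hU

lemma BurchAux.exists_regular_notMem {M : Type u} [AddCommGroup M] [Module R M]
    [IsNoetherianRing R] [Module.Finite R M] [IsLocalRing R]
    (I : Ideal R) (b r : R) (hb : b ∈ maximalIdeal R) (hbI : b ∉ I)
    (hr : r ∈ maximalIdeal R) (hrreg : IsSMulRegular M r) (hrI : r ∈ I) :
    ∃ a ∈ maximalIdeal R, a ∉ I ∧ IsSMulRegular M a := by
  by_contra hcon
  push_neg at hcon
  have hmem : ∀ n : ℕ, b + r ^ (n + 1) ∈ maximalIdeal R := fun n =>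
    add_mem hb (Ideal.pow_mem_of_mem _ hr _ (Nat.succ_pos n))
  have hnotI : ∀ n : ℕ, b + r ^ (n + 1) ∉ I := by
    intro n h
    have hrn : r ^ (n + 1) ∈ I := Ideal.pow_mem_of_mem _ hrI _ (Nat.succ_pos n)
    exact hbI (by simpa using I.sub_mem h hrn)
  have hnreg : ∀ n : ℕ, ¬ IsSMulRegular M (b + r ^ (n + 1)) := fun n h =>
    hcon _ (hmem n) (hnotI n) h
  have hex : ∀ n : ℕ, ∃ p ∈ associatedPrimes R M, b + r ^ (n + 1) ∈ p := by
    intro n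
    have : b + r ^ (n + 1) ∈ ({ s : R | IsSMulRegular M s }ᶜ : Set R) := hnreg n
    rw [← biUnion_associatedPrimes_eq_compl_regular R M] at this
    simpa using this
  choose P hPass hPmem using hex
  have hrp : ∀ p ∈ associatedPrimes R M, r ∉ p := by
    rintro p hpA hrmem
    obtain ⟨hpr, z, hz⟩ := BurchAux.isAP_iff.mp hpA
    have hz0 : z ≠ 0 := by
      intro h0
      apply hpr.ne_top
      rw [hz, h0, Submodule.span_zero_singleton, Submodule.annihilator_bot]
    have hrz : r • z = 0 := (Submodule.mem_annihilator_span_singleton _ _).mp (hz ▸ hrmem)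
    exact hz0 (hrreg (show r • z = r • 0 by rw [hrz, smul_zero]))
  have hne : ∀ n m : ℕ, n < m → P n ≠ P m := by
    intro n m hlt hPeq
    have hPprime : (P n).IsPrime := (hPass n).isPrime
    have h1 : b + r ^ (n + 1) ∈ P n := hPmem n
    have h2 : b + r ^ (m + 1) ∈ P n := hPeq ▸ hPmem m
    have hpow : r ^ (n + 1) * r ^ (m - n) = r ^ (m + 1) := by
      rw [← pow_add]; congr 1; omega
    have hdiff : r ^ (n + 1) * (r ^ (m - n) - 1) ∈ P n := by
      have heq : r ^ (n + 1) * (r ^ (m - n) - 1) = (b + r ^ (m + 1)) - (b + r ^ (n + 1)) := by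
        rw [mul_sub, hpow, mul_one]; ring
      rw [heq]
      exact (P n).sub_mem h2 h1
    rcases hPprime.mem_or_mem hdiff with h | h
    · exact hrp (P n) (hPass n) (hPprime.mem_of_pow_mem _ h)
    · have hPle : P n ≤ maximalIdeal R := IsLocalRing.le_maximalIdeal hPprime.ne_top
      have hrmn : r ^ (m - n) ∈ maximalIdeal R :=
        Ideal.pow_mem_of_mem _ hr _ (by omega)
      have hone : (1 : R) ∈ maximalIdeal R := by
        have h4 := (maximalIdeal R).sub_mem hrmn (hPle h)
        rwa [sub_sub_cancel] at h4
      exact (IsLocalRing.maximalIdeal.isMaximal R).ne_top ((Ideal.eq_top_iff_one _).mpr hone)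
  have hinj : Function.Injective P := by
    intro n m h
    by_contra hnm
    rcases Ne.lt_or_gt hnm with hlt | hlt
    · exact hne n m hlt h
    · exact hne m n hlt h.symm
  exact Set.not_infinite.mpr (BurchAux.associatedPrimes_finite M)
    (Set.infinite_of_injective_forall_mem hinj hPass)

lemma BurchAux.smul_residue [IsLocalRing R] (s : R) (c : ResidueField R) :
    s • c = IsLocalRing.residue R s * c := by
  obtain ⟨t, rfl⟩ := Ideal.Quotient.mk_surjective c
  exact Algebra.smul_def (A := ResidueField R) s _

lemma BurchAux.core_summand {X : Type u} [AddCommGroup X] [Module R X] [IsLocalRing R]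
    (N : Submodule R X) (a : R) (ha : a ∈ maximalIdeal R) (x : X)
    (hx : x ∈ N.colonBy (maximalIdeal R)) (hax : a • x ∉ maximalIdeal R • N) :
    ∃ (f : (↥N ⧸ (Ideal.span {a} • (⊤ : Submodule R ↥N))) →ₗ[R] ResidueField R)
      (g : ResidueField R →ₗ[R] (↥N ⧸ (Ideal.span {a} • (⊤ : Submodule R ↥N)))),
      f ∘ₗ g = LinearMap.id := by
  classical
  have haxN : a • x ∈ N := hx a ha
  set y : ↥N := ⟨a • x, haxN⟩ with hydef
  have hytop : y ∉ (maximalIdeal R • ⊤ : Submodule R ↥N) := by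
    intro h
    apply hax
    have h2 := Submodule.mem_map_of_mem (f := N.subtype) h
    rwa [Submodule.map_smul'', Submodule.map_top, Submodule.range_subtype] at h2
  letI : Module (ResidueField R) (↥N ⧸ (maximalIdeal R • ⊤ : Submodule R ↥N)) :=
    inferInstanceAs (Module (R ⧸ maximalIdeal R) (↥N ⧸ (maximalIdeal R • ⊤ : Submodule R ↥N)))
  set ybar : ↥N ⧸ (maximalIdeal R • ⊤ : Submodule R ↥N) := Submodule.Quotient.mk y with hybar
  have hy0 : ybar ≠ 0 := by rwa [hybar, Ne, Submodule.Quotient.mk_eq_zero]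
  obtain ⟨q, hq⟩ := Submodule.exists_isCompl (Submodule.span (ResidueField R) {ybar})
  set proj := Submodule.linearProjOfIsCompl _ q hq with hproj
  set funct : (↥N ⧸ (maximalIdeal R • ⊤ : Submodule R ↥N)) →ₗ[ResidueField R] ResidueField R :=
    (LinearEquiv.coord (ResidueField R) _ ybar hy0).toLinearMap ∘ₗ proj with hfunct
  have hfy : funct ybar = 1 := by
    have h1 : proj ybar =
        ⟨ybar, Submodule.mem_span_singleton_self ybar⟩ := by
      rw [hproj]
      exact Submodule.linearProjOfIsCompl_apply_left hq
        ⟨ybar, Submodule.mem_span_singleton_self ybar⟩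
    rw [hfunct, LinearMap.comp_apply, h1]
    exact LinearEquiv.coord_self (ResidueField R) _ ybar hy0
  have hsmul : ∀ (s : R) (n : ↥N),
      funct (Submodule.Quotient.mk (s • n)) = IsLocalRing.residue R s * funct
        (Submodule.Quotient.mk n) := by
    intro s n
    have hmk : (Submodule.Quotient.mk (s • n) : ↥N ⧸ (maximalIdeal R • ⊤ : Submodule R ↥N)) =
        (IsLocalRing.residue R s) • Submodule.Quotient.mk n := rfl
    rw [hmk, map_smul, smul_eq_mul]
  let ψ : ↥N →ₗ[R] ResidueField R :=
    { toFun := fun n => funct (Submodule.Quotient.mk n)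
      map_smul' := by
        intro s n
        show funct (Submodule.Quotient.mk (s • n)) = s • funct (Submodule.Quotient.mk n)
        rw [hsmul, BurchAux.smul_residue]
      map_add' := by
        intro n m
        show funct (Submodule.Quotient.mk (n + m)) =
          funct (Submodule.Quotient.mk n) + funct (Submodule.Quotient.mk m)
        rw [← map_add]
        congr 1 }
  have hker : (Ideal.span {a} : Ideal R) • (⊤ : Submodule R ↥N) ≤ LinearMap.ker ψ := by
    refine Submodule.smul_le.mpr ?_
    intro c hc n _
    have hcm : c ∈ maximalIdeal R := by
      have hle : Ideal.span {a} ≤ maximalIdeal R := by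
        rw [Ideal.span_le, Set.singleton_subset_iff]; exact ha
      exact hle hc
    rw [LinearMap.mem_ker]
    show funct (Submodule.Quotient.mk (c • n)) = 0
    rw [hsmul]
    have h0 : IsLocalRing.residue R c = 0 := Ideal.Quotient.eq_zero_iff_mem.mpr hcm
    rw [h0, zero_mul]
  set g0 : R →ₗ[R] (↥N ⧸ (Ideal.span {a} • (⊤ : Submodule R ↥N))) :=
    LinearMap.toSpanSingleton R _ (Submodule.Quotient.mk y) with hg0
  have hgker : (maximalIdeal R : Submodule R R) ≤ LinearMap.ker g0 := by
    intro s hs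
    rw [LinearMap.mem_ker, hg0, LinearMap.toSpanSingleton_apply, ← Submodule.Quotient.mk_smul,
      Submodule.Quotient.mk_eq_zero]
    have hsx : s • x ∈ N := hx s hs
    have heq : s • y = a • (⟨s • x, hsx⟩ : ↥N) := by
      apply Subtype.ext
      show s • (a • x) = a • (s • x)
      rw [smul_comm]
    rw [heq]
    exact Submodule.smul_mem_smul (Submodule.mem_span_singleton_self a) trivial
  refine ⟨Submodule.liftQ _ ψ hker, Submodule.liftQ _ g0 hgker, ?_⟩
  apply LinearMap.ext
  intro c
  obtain ⟨s, rfl⟩ := Ideal.Quotient.mk_surjective c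
  show Submodule.liftQ _ ψ hker (Submodule.liftQ _ g0 hgker (Submodule.Quotient.mk s)) =
    Ideal.Quotient.mk (maximalIdeal R) s
  rw [Submodule.liftQ_apply, hg0, LinearMap.toSpanSingleton_apply, map_smul,
    Submodule.liftQ_apply]
  have hψy : ψ y = 1 := hfy
  rw [hψy, BurchAux.smul_residue, mul_one]
  rfl

end Aux

/-- Over a Noetherian local ring `(R, 𝔪, k)`, if `N` is a Burch submodule of a
finitely generated module `X`, then there is `a ∈ 𝔪` such that `k` is a direct summand of
`N/aN`. If moreover `depth_R N > 0` (i.e. `𝔪` contains an `N`-regular element), then `a` can be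
chosen to be a non-zero-divisor on `N` and such that `aN` is a Burch submodule of `N`. -/
theorem burch_residue_field_summand
    {R : Type u} [CommRing R] [IsNoetherianRing R] [IsLocalRing R]
    {X : Type u} [AddCommGroup X] [Module R X] [Module.Finite R X]
    (N : Submodule R X) (hN : N.IsBurch) :
    (∃ a ∈ IsLocalRing.maximalIdeal R,
      ∃ (f : (↥N ⧸ (Ideal.span {a} • (⊤ : Submodule R ↥N))) →ₗ[R] IsLocalRing.ResidueField R)
        (g : IsLocalRing.ResidueField R →ₗ[R] (↥N ⧸ (Ideal.span {a} • (⊤ : Submodule R ↥N)))),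
        f ∘ₗ g = LinearMap.id) ∧
    ((∃ r ∈ IsLocalRing.maximalIdeal R, IsSMulRegular (↥N) r) →
      ∃ a ∈ IsLocalRing.maximalIdeal R, IsSMulRegular (↥N) a ∧
        (∃ (f : (↥N ⧸ (Ideal.span {a} • (⊤ : Submodule R ↥N))) →ₗ[R] IsLocalRing.ResidueField R)
          (g : IsLocalRing.ResidueField R →ₗ[R]
            (↥N ⧸ (Ideal.span {a} • (⊤ : Submodule R ↥N)))),
          f ∘ₗ g = LinearMap.id) ∧
        (Ideal.span {a} • (⊤ : Submodule R ↥N)).IsBurch) := by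
  classical
  haveI : Module.Finite R ↥N := Module.Finite.iff_fg.mpr (IsNoetherian.noetherian N)
  have hNcol : N ≤ N.colonBy (IsLocalRing.maximalIdeal R) := fun z hz r hr => N.smul_mem r hz
  have hexists : ∃ b ∈ IsLocalRing.maximalIdeal R,
      ∃ x ∈ N.colonBy (IsLocalRing.maximalIdeal R),
        b • x ∉ IsLocalRing.maximalIdeal R • N := by
    by_contra h
    push_neg at h
    apply hN
    apply le_antisymm
    · exact Submodule.smul_le.mpr (fun r hr z hz => h r hr z hz)
    · exact smul_mono_right _ hNcol
  obtain ⟨b, hb, xb, hxb, hbxb⟩ := hexists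
  constructor
  · exact ⟨b, hb, BurchAux.core_summand N b hb xb hxb hbxb⟩
  · rintro ⟨r, hr, hrreg⟩
    set I : Ideal R :=
      (IsLocalRing.maximalIdeal R • N).colon (N.colonBy (IsLocalRing.maximalIdeal R)) with hI
    have hbI : b ∉ I := fun h => hbxb (Submodule.mem_colon.mp h xb hxb)
    have hchoice : ∃ a ∈ IsLocalRing.maximalIdeal R, a ∉ I ∧ IsSMulRegular ↥N a := by
      by_cases hrI : r ∈ I
      · exact BurchAux.exists_regular_notMem I b r hb hbI hr hrreg hrI
      · exact ⟨r, hr, hrI, hrreg⟩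
    obtain ⟨a, ha, haI, hareg⟩ := hchoice
    have hxa : ∃ x ∈ N.colonBy (IsLocalRing.maximalIdeal R),
        a • x ∉ IsLocalRing.maximalIdeal R • N := by
      by_contra h
      push_neg at h
      exact haI (Submodule.mem_colon.mpr h)
    obtain ⟨x, hxcol, hax⟩ := hxa
    have haxN : a • x ∈ N := hxcol a ha
    refine ⟨a, ha, hareg, BurchAux.core_summand N a ha x hxcol hax, ?_⟩
    intro heq
    set y : ↥N := ⟨a • x, haxN⟩ with hydef
    have hycolon : y ∈ (Ideal.span {a} • (⊤ : Submodule R ↥N)).colonBy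
        (IsLocalRing.maximalIdeal R) := by
      intro s hs
      have hsx : s • x ∈ N := hxcol s hs
      have heqy : s • y = a • (⟨s • x, hsx⟩ : ↥N) := by
        apply Subtype.ext
        show s • (a • x) = a • (s • x)
        rw [smul_comm]
      rw [heqy]
      exact Submodule.smul_mem_smul (Submodule.mem_span_singleton_self a) trivial
    have key : ∀ s ∈ IsLocalRing.maximalIdeal R, s • x ∈ IsLocalRing.maximalIdeal R • N := by
      intro s hs
      have hsx : s • x ∈ N := hxcol s hs
      have h1 : s • y ∈ IsLocalRing.maximalIdeal R •
          ((Ideal.span {a} • (⊤ : Submodule R ↥N)).colonBy (IsLocalRing.maximalIdeal R)) :=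
        Submodule.smul_mem_smul hs hycolon
      rw [heq] at h1
      obtain ⟨w, hw, hww⟩ := BurchAux.mem_smul_span_singleton_smul h1
      have haw : a • (⟨s • x, hsx⟩ : ↥N) = a • w := by
        rw [← hww]
        apply Subtype.ext
        show a • (s • x) = s • (a • x)
        rw [smul_comm]
      have hwz : (⟨s • x, hsx⟩ : ↥N) = w := hareg haw
      have h2 : (⟨s • x, hsx⟩ : ↥N) ∈ (IsLocalRing.maximalIdeal R • ⊤ : Submodule R ↥N) :=
        hwz ▸ hw
      have h3 := Submodule.mem_map_of_mem (f := N.subtype) h2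
      rwa [Submodule.map_smul'', Submodule.map_top, Submodule.range_subtype] at h3
    exact hax (key a ha)
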